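/- (Configuration encoding of sets of teams.) Let U be a finite set of users, P a finite set of resources, N : U → powerset(P), d ≥ 1, t ≥ 1. For N' ⊆ P let U_{N'} = {u ∈ U : N(u) = N'}, and let 𝒞 be the set of all families c = {N₁,…,N_b} with b ≤ t, Nᵢ ⊆ P, and ⋃ᵢ Nᵢ = P. Then there exist d pairwise disjoint sets V₁,…,V_d ⊆ U with |Vᵢ| ≤ t and N(Vᵢ) ⊇ P for all i, if and only if there exists an assignment x : 𝒞 → ℕ with ∑_{c∈𝒞} x(c) = d and, for every N' ⊆ P, ∑_{c ∈ 𝒞 : N' ∈ c} x(c) ≤ |U_{N'}|. -/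

import Mathlib

open Finset

/-- Configuration encoding of sets of teams: `d` pairwise disjoint teams of size at
most `t` each covering all resources exist iff configurations (sets of at most `t`
neighborhood types whose union is everything) can be assigned multiplicities
summing to `d` without exceeding, for any neighborhood type `N'`, the number of
users of type `N'`. -/
theorem configuration_encoding {U P : Type*} [Fintype U] [DecidableEq U]
    [Fintype P] [DecidableEq P]
    (Nf : U → Finset P) (d t : ℕ) (hd : 1 ≤ d) (ht : 1 ≤ t) :
    (∃ V : Fin d → Finset U,
        (∀ i j, i ≠ j → Disjoint (V i) (V j)) ∧
        (∀ i, (V i).card ≤ t) ∧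
        (∀ i, ∀ r : P, ∃ u ∈ V i, r ∈ Nf u))
    ↔ (∃ x : Finset (Finset P) → ℕ,
        (∑ c ∈ Finset.univ.filter
            (fun c : Finset (Finset P) => c.card ≤ t ∧ c.sup id = Finset.univ),
            x c) = d ∧
        ∀ N' : Finset P,
          (∑ c ∈ Finset.univ.filter
              (fun c : Finset (Finset P) =>
                (c.card ≤ t ∧ c.sup id = Finset.univ) ∧ N' ∈ c),
              x c) ≤ (Finset.univ.filter (fun u => Nf u = N')).card) := by
  classical
  constructor
  · rintro ⟨V, hdisj, hcard, hcov⟩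
    set f : Fin d → Finset (Finset P) := fun i => (V i).image Nf with hf
    have hmem : ∀ i, f i ∈ Finset.univ.filter
        (fun c : Finset (Finset P) => c.card ≤ t ∧ c.sup id = Finset.univ) := by
      intro i
      simp only [mem_filter, mem_univ, true_and]
      refine ⟨le_trans card_image_le (hcard i), ?_⟩
      apply Finset.eq_univ_of_forall
      intro r
      obtain ⟨u, hu, hr⟩ := hcov i r
      exact Finset.mem_sup.mpr ⟨Nf u, mem_image_of_mem Nf hu, hr⟩
    refine ⟨fun c0 => (Finset.univ.filter (fun i => f i = c0)).card, ?_, ?_⟩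
    · have := Finset.card_eq_sum_card_fiberwise (s := (Finset.univ : Finset (Fin d)))
        (t := Finset.univ.filter
          (fun c : Finset (Finset P) => c.card ≤ t ∧ c.sup id = Finset.univ))
        (f := f) (fun i _ => hmem i)
      simpa using this.symm
    · intro N'
      set s : Finset (Fin d) := Finset.univ.filter (fun i => N' ∈ f i) with hs
      have key : (∑ c ∈ Finset.univ.filter
          (fun c : Finset (Finset P) =>
            (c.card ≤ t ∧ c.sup id = Finset.univ) ∧ N' ∈ c),
          (Finset.univ.filter (fun i => f i = c)).card) = s.card := by
        have hmaps : ∀ i ∈ s, f i ∈ Finset.univ.filter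
            (fun c : Finset (Finset P) =>
              (c.card ≤ t ∧ c.sup id = Finset.univ) ∧ N' ∈ c) := by
          intro i hi
          have := hmem i
          simp only [mem_filter, mem_univ, true_and] at this ⊢
          exact ⟨this, (mem_filter.mp hi).2⟩
        rw [Finset.card_eq_sum_card_fiberwise hmaps]
        apply Finset.sum_congr rfl
        intro c hc
        congr 1
        ext i
        simp only [hs, mem_filter, mem_univ, true_and]
        constructor
        · intro h
          refine ⟨?_, h⟩
          have := (mem_filter.mp hc).2.2
          rw [h]; exact this
        · exact fun h => h.2
      rw [key]
      have hex : ∀ i : {i // i ∈ s}, ∃ u, u ∈ V i.1 ∧ Nf u = N' := by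
        intro i
        have : N' ∈ (V i.1).image Nf := (mem_filter.mp i.2).2
        obtain ⟨u, hu, he⟩ := Finset.mem_image.mp this
        exact ⟨u, hu, he⟩
      choose g hg1 hg2 using hex
      have hle : s.attach.card ≤ (Finset.univ.filter (fun u => Nf u = N')).card := by
        apply Finset.card_le_card_of_injOn g
        · intro a _
          simp only [mem_coe, mem_filter, mem_univ, true_and]
          exact hg2 a
        · intro a _ b _ hab
          by_contra hne
          have hne' : a.1 ≠ b.1 := fun h => hne (Subtype.ext h)
          have := hdisj a.1 b.1 hne'
          exact (Finset.disjoint_left.mp this (hg1 a)) (hab ▸ hg1 b)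
      simpa using hle
  · rintro ⟨x, hsum, hle⟩
    set pred : Finset (Finset P) → Prop :=
      fun c => c.card ≤ t ∧ c.sup id = Finset.univ with hpred
    set T : Finset ((_ : Finset (Finset P)) × ℕ) :=
      (Finset.univ.filter pred).sigma (fun c => Finset.range (x c)) with hT
    have hTcard : T.card = d := by
      rw [hT, Finset.card_sigma]
      simpa using hsum
    have hcard' : Fintype.card {a // a ∈ T} = d := by
      rw [Fintype.card_coe]; exact hTcard
    let e : {a // a ∈ T} ≃ Fin d := Fintype.equivFinOfCardEq hcard'
    set f : Fin d → Finset (Finset P) := fun i => (e.symm i).1.1 with hf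
    have hmemf : ∀ i, pred (f i) := by
      intro i
      have h : ((e.symm i) : (_ : Finset (Finset P)) × ℕ) ∈
          (Finset.univ.filter pred).sigma (fun c => Finset.range (x c)) := (e.symm i).2
      exact (mem_filter.mp (Finset.mem_sigma.mp h).1).2
    -- counting lemma
    have hcount : ∀ N' : Finset P,
        (Finset.univ.filter (fun i => N' ∈ f i)).card =
        ∑ c ∈ Finset.univ.filter (fun c => pred c ∧ N' ∈ c), x c := by
      intro N'
      have h1 : (Finset.univ.filter (fun i => N' ∈ f i)).card =
          (T.filter (fun a => N' ∈ a.1)).card := by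
        apply Finset.card_bij (fun i _ => ((e.symm i) : (_ : Finset (Finset P)) × ℕ))
        · intro i hi
          simp only [mem_filter]
          exact ⟨(e.symm i).2, (mem_filter.mp hi).2⟩
        · intro a _ b _ hab
          have : e.symm a = e.symm b := Subtype.ext hab
          exact e.symm.injective this
        · intro a ha
          refine ⟨e ⟨a, (mem_filter.mp ha).1⟩, ?_, ?_⟩
          · simp only [mem_filter, mem_univ, true_and, hf, Equiv.symm_apply_apply]
            exact (mem_filter.mp ha).2
          · simp [Equiv.symm_apply_apply]
      rw [h1]
      have h2 : T.filter (fun a => N' ∈ a.1) =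
          (Finset.univ.filter (fun c => pred c ∧ N' ∈ c)).sigma
            (fun c => Finset.range (x c)) := by
        ext a
        simp only [hT, Finset.mem_filter, Finset.mem_sigma, mem_univ, true_and]
        tauto
      rw [h2, Finset.card_sigma]
      simp
    have hD : ∀ N' : Finset P,
        Fintype.card {i : Fin d // N' ∈ f i} ≤
        Fintype.card {u : U // Nf u = N'} := by
      intro N'
      rw [Fintype.card_subtype, Fintype.card_subtype, hcount N']
      exact hle N'
    have hemb : ∀ N' : Finset P,
        Nonempty ({i : Fin d // N' ∈ f i} ↪ {u : U // Nf u = N'}) := by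
      intro N'
      exact Function.Embedding.nonempty_of_card_le (hD N')
    let emb : ∀ N' : Finset P, {i : Fin d // N' ∈ f i} ↪ {u : U // Nf u = N'} :=
      fun N' => (hemb N').some
    refine ⟨fun i => (f i).attach.image
      (fun N => ((emb N.1 ⟨i, N.2⟩ : {u : U // Nf u = N.1}) : U)), ?_, ?_, ?_⟩
    · intro i j hij
      rw [Finset.disjoint_left]
      rintro u hu hu'
      obtain ⟨⟨N1, m1⟩, _, h1⟩ := Finset.mem_image.mp hu
      obtain ⟨⟨N2, m2⟩, _, h2⟩ := Finset.mem_image.mp hu'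
      have e1 : Nf u = N1 := by rw [← h1]; exact (emb N1 ⟨i, m1⟩).2
      have e2 : Nf u = N2 := by rw [← h2]; exact (emb N2 ⟨j, m2⟩).2
      subst e1
      have hN : N2 = Nf u := e2.symm
      subst hN
      have : (emb (Nf u)) ⟨i, m1⟩ = (emb (Nf u)) ⟨j, m2⟩ :=
        Subtype.ext (h1.trans h2.symm)
      have := (emb (Nf u)).injective this
      exact hij (congrArg Subtype.val this)
    · intro i
      calc _ ≤ (f i).attach.card := Finset.card_image_le
        _ = (f i).card := Finset.card_attach
        _ ≤ t := (hmemf i).1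
    · intro i r
      have hsup := (hmemf i).2
      have hr : r ∈ (f i).sup id := by rw [hsup]; exact mem_univ r
      obtain ⟨N', hN', hrN⟩ := Finset.mem_sup.mp hr
      refine ⟨((emb N' ⟨i, hN'⟩ : {u : U // Nf u = N'}) : U), ?_, ?_⟩
      · exact Finset.mem_image.mpr ⟨⟨N', hN'⟩, Finset.mem_attach _ _, rfl⟩
      · rw [(emb N' ⟨i, hN'⟩).2]; exact hrN
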